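/- Let Γ be a finite simplicial graph such that Γ \ st(v) is connected (and possibly empty) for every vertex v. Then Γ has no SILs, i.e., for every pair of non-adjacent vertices u, v, every connected component of Γ \ (lk(u) ∩ lk(v)) contains u or v. -/

import Mathlib

/-- The vertex set of `Γ \ st v`. -/
def StarComplement {V : Type} (G : SimpleGraph V) (v : V) : Set V :=
  {x : V | x ≠ v ∧ ¬ G.Adj v x}

/-- The vertex set of `Γ \ (lk u ∩ lk v)`. -/
def SILSet {V : Type} (G : SimpleGraph V) (u v : V) : Set V :=
  {x : V | ¬(G.Adj x u ∧ G.Adj x v)}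

/-- Inclusion homomorphism between induced subgraphs. -/
def incHom {V : Type} (G : SimpleGraph V) {s t : Set V} (h : s ⊆ t) :
    G.induce s →g G.induce t :=
  ⟨Set.inclusion h, fun {a b} hab => hab⟩

theorem no_sil_of_star_complements_connected {V : Type} [Fintype V]
    (G : SimpleGraph V)
    (hconn : ∀ v : V, (G.induce (StarComplement G v)).Preconnected) :
    ∀ u v : V, u ≠ v → ¬ G.Adj u v →
      ∀ w : SILSet G u v,
        (G.induce (SILSet G u v)).connectedComponentMk w =
          (G.induce (SILSet G u v)).connectedComponentMk
            ⟨u, fun h => G.loopless.irrefl u h.1⟩ ∨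
        (G.induce (SILSet G u v)).connectedComponentMk w =
          (G.induce (SILSet G u v)).connectedComponentMk
            ⟨v, fun h => G.loopless.irrefl v h.2⟩ := by
  intro u v huv hadj w
  obtain ⟨x, hx⟩ := w
  rcases not_and_or.mp hx with h1 | h2
  · -- ¬ G.Adj x u
    by_cases hxu : x = u
    · subst hxu; exact Or.inl rfl
    · right
      have hsub : StarComplement G u ⊆ SILSet G u v := fun y hy hc => hy.2 hc.1.symm
      have hx' : x ∈ StarComplement G u := ⟨hxu, fun h => h1 h.symm⟩
      have hv' : v ∈ StarComplement G u := ⟨huv.symm, hadj⟩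
      have hr := (hconn u ⟨x, hx'⟩ ⟨v, hv'⟩).map (incHom G hsub)
      exact SimpleGraph.ConnectedComponent.sound hr
  · -- ¬ G.Adj x v
    by_cases hxv : x = v
    · subst hxv; exact Or.inr rfl
    · left
      have hsub : StarComplement G v ⊆ SILSet G u v := fun y hy hc => hy.2 hc.2.symm
      have hx' : x ∈ StarComplement G v := ⟨hxv, fun h => h2 h.symm⟩
      have hu' : u ∈ StarComplement G v := ⟨huv, fun h => hadj h.symm⟩
      have hr := (hconn v ⟨x, hx'⟩ ⟨u, hu'⟩).map (incHom G hsub)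
      exact SimpleGraph.ConnectedComponent.sound hr
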